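/- arXiv:2301.03894 — 5 statements merged into one kernel-verified Lean document; each statement's English description precedes it below -/
import Mathlib

section
/- Let F₀ be a twice differentiable cdf with infinite right endpoint, eventually positive density p₀ = F₀′, satisfying the von Mises condition with index γ ≥ 0. Then lim_{u→∞} u p₀(u) / ∫_u^∞ x p₀²(x)/(1 − F₀(x)) dx = 1. -/
open Filter Real MeasureTheory

/-- `F` is a cumulative distribution function. -/
def IsCDF (F : ℝ → ℝ) : Prop :=
  Monotone F ∧ Tendsto F atBot (nhds 0) ∧ Tendsto F atTop (nhds 1)

/-- The von Mises condition with index `γ`. -/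
def VonMises (F₀ : ℝ → ℝ) (γ : ℝ) : Prop :=
  Tendsto (fun x => (1 - F₀ x) * deriv (deriv F₀) x / (deriv F₀ x) ^ 2)
    atTop (nhds (-γ - 1))

open Set in

lemma lemA (F₀ : ℝ → ℝ) (γ : ℝ)
    (hend : ∀ x, F₀ x < 1)
    (hdiff : ∀ x, DifferentiableAt ℝ F₀ x)
    (hdiff2 : ∀ x, DifferentiableAt ℝ (deriv F₀) x)
    (hpos : ∀ᶠ x in atTop, 0 < deriv F₀ x)
    (hVM : Tendsto (fun x => (1 - F₀ x) * deriv (deriv F₀) x / (deriv F₀ x) ^ 2)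
      atTop (nhds (-γ - 1))) :
    Tendsto (fun x => (1 - F₀ x) / (x * deriv F₀ x)) atTop (nhds γ) := by
  obtain ⟨a₀, ha₀⟩ := eventually_atTop.mp hpos
  set ψ : ℝ → ℝ := fun x => (1 - F₀ x) / deriv F₀ x with hψdef
  set d : ℝ → ℝ := fun x => -1 - (1 - F₀ x) * deriv (deriv F₀) x / (deriv F₀ x) ^ 2 with hddef
  have hd_tendsto : Tendsto d atTop (nhds γ) := by
    have h := (tendsto_const_nhds (x := (-1:ℝ)) (f := atTop)).sub hVM
    have : (-1 : ℝ) - (-γ - 1) = γ := by ring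
    rwa [this] at h
  have hdψ : ∀ x, 0 < deriv F₀ x → HasDerivAt ψ (d x) x := by
    intro x hx
    have h1 : HasDerivAt (fun y => 1 - F₀ y) (-(deriv F₀ x)) x := (hdiff x).hasDerivAt.const_sub 1
    have h2 : HasDerivAt (deriv F₀) (deriv (deriv F₀) x) x := (hdiff2 x).hasDerivAt
    have h3 := h1.div h2 hx.ne'
    have hid : (-deriv F₀ x * deriv F₀ x - (1 - F₀ x) * deriv (deriv F₀) x) / deriv F₀ x ^ 2
        = d x := by
      rw [hddef, sub_div, neg_mul, neg_div, pow_two, div_self (mul_ne_zero hx.ne' hx.ne')]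
      simp [pow_two]
    exact hid ▸ h3
  rw [Metric.tendsto_atTop]
  intro ε hε
  have h4 : (0:ℝ) < ε/4 := by linarith
  obtain ⟨a₁, ha₁⟩ := Metric.tendsto_atTop.mp hd_tendsto (ε/4) h4
  set a : ℝ := max a₁ (max a₀ 1) with hadef
  have hpa : ∀ x ∈ Ici a, 0 < deriv F₀ x := fun x hx =>
    ha₀ x (le_trans (le_trans (le_max_left a₀ 1) (le_max_right a₁ _)) hx)
  have ha1 : (1:ℝ) ≤ a := le_trans (le_max_right a₀ 1) (le_max_right a₁ _)
  set φ : ℝ → ℝ := fun y => ψ y - γ * y with hφdef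
  have hφ : ∀ x ∈ Ici a, HasDerivWithinAt φ (d x - γ) (Ici a) x := by
    intro x hx
    have h5 : HasDerivAt (fun y => γ * y) γ x := by simpa using (hasDerivAt_id x).const_mul γ
    exact ((hdψ x (hpa x hx)).sub h5).hasDerivWithinAt
  have hbound : ∀ x ∈ Ici a, ‖d x - γ‖ ≤ ε/4 := by
    intro x hx
    have := ha₁ x (le_trans (le_max_left _ _) hx)
    rw [Real.dist_eq] at this
    rw [Real.norm_eq_abs]
    linarith
  have key : ∀ x, a ≤ x → |φ x - φ a| ≤ ε/4 * (x - a) := by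
    intro x hx
    have := (convex_Ici a).norm_image_sub_le_of_norm_hasDerivWithin_le hφ hbound
      self_mem_Ici (hx : x ∈ Ici a)
    rw [Real.norm_eq_abs, Real.norm_eq_abs, abs_of_nonneg (by linarith : (0:ℝ) ≤ x - a)] at this
    exact this
  set C : ℝ := |φ a| with hCdef
  have hC : 0 ≤ C := abs_nonneg _
  refine ⟨max a (4*C/ε + 1), fun x hx => ?_⟩
  have hxa : a ≤ x := le_trans (le_max_left _ _) hx
  have hxC : 4*C/ε + 1 ≤ x := le_trans (le_max_right _ _) hx
  have hx0 : 0 < x := lt_of_lt_of_le (by linarith) hxa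
  have hp : 0 < deriv F₀ x := hpa x hxa
  rw [Real.dist_eq]
  have heq : (1 - F₀ x) / (x * deriv F₀ x) - γ = φ x / x := by
    field_simp [hφdef, hψdef]
    simp only [hφdef, hψdef]
    field_simp <;> ring
  rw [heq, abs_div, abs_of_pos hx0]
  rw [div_lt_iff₀ hx0]
  have h6 : |φ x| ≤ C + ε/4 * (x - a) := by
    have := key x hxa
    have h7 : |φ x| - |φ a| ≤ |φ x - φ a| := by
      have := abs_sub_abs_le_abs_sub (φ x) (φ a)
      linarith
    linarith
  have h8 : 4*C/ε + 1 ≤ x := hxC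
  have h9 : 4*C ≤ ε * (x - 1) := by
    rw [div_add' _ _ _ (ne_of_gt hε), div_le_iff₀ hε] at h8
    nlinarith
  nlinarith

open Set in

lemma lemB (F₀ : ℝ → ℝ) (γ : ℝ) (hγ : 0 ≤ γ)
    (hF1 : Tendsto F₀ atTop (nhds 1))
    (hmono : Monotone F₀)
    (hend : ∀ x, F₀ x < 1)
    (hdiff : ∀ x, DifferentiableAt ℝ F₀ x)
    (hdiff2 : ∀ x, DifferentiableAt ℝ (deriv F₀) x)
    (hpos : ∀ᶠ x in atTop, 0 < deriv F₀ x)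
    (hVM : Tendsto (fun x => (1 - F₀ x) * deriv (deriv F₀) x / (deriv F₀ x) ^ 2)
      atTop (nhds (-γ - 1))) :
    Tendsto (fun x => x * deriv F₀ x) atTop (nhds 0) := by
  have pc : Continuous (deriv F₀) := Differentiable.continuous (fun x => hdiff2 x)
  have hVneg : ∀ᶠ x in atTop,
      (1 - F₀ x) * deriv (deriv F₀) x / (deriv F₀ x) ^ 2 < -1/2 :=
    hVM.eventually_lt_const (by linarith)
  obtain ⟨a, ha⟩ := eventually_atTop.mp ((hVneg.and hpos).and (eventually_ge_atTop 1))
  have hpa : ∀ x, a ≤ x → 0 < deriv F₀ x := fun x hx => ((ha x hx).1).2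
  have ha1 : (1:ℝ) ≤ a := (ha a le_rfl).2
  have hd2neg : ∀ x, a ≤ x → deriv (deriv F₀) x ≤ 0 := by
    intro x hx
    have h1 := ((ha x hx).1).1
    have h1F : 0 < 1 - F₀ x := by linarith [hend x]
    have hp2 : 0 < (deriv F₀ x) ^ 2 := pow_pos (hpa x hx) 2
    have hneg : (1 - F₀ x) * deriv (deriv F₀) x < 0 := by
      have := (div_neg_iff.mp (lt_trans h1 (by norm_num))).resolve_left
        (fun h => absurd h.2 (not_lt.mpr hp2.le))
      exact this.1
    nlinarith
  have pA : AntitoneOn (deriv F₀) (Ici a) := by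
    apply antitoneOn_of_deriv_nonpos (convex_Ici a) pc.continuousOn
      (fun x _ => (hdiff2 x).differentiableWithinAt)
    intro x hx
    rw [interior_Ici] at hx
    exact hd2neg x (le_of_lt hx)
  have hhalf : Tendsto (fun t : ℝ => t / 2) atTop atTop :=
    tendsto_id.atTop_div_const two_pos
  have hlim : Tendsto (fun t : ℝ => 2 * (1 - F₀ (t / 2))) atTop (nhds 0) := by
    have h := ((tendsto_const_nhds (x := (1:ℝ)) (f := atTop)).sub (hF1.comp hhalf)).const_mul 2
    simpa using h
  apply squeeze_zero' (t₀ := atTop) (f := fun t => t * deriv F₀ t)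
    (g := fun t => 2 * (1 - F₀ (t / 2)))
  · filter_upwards [eventually_ge_atTop a] with t ht
    exact mul_nonneg (by linarith) (hpa t ht).le
  · filter_upwards [eventually_ge_atTop (2 * a)] with t ht
    have hta : a ≤ t / 2 := by linarith
    have hta' : a ≤ t := by linarith
    have hint : ∫ y in (t/2)..t, deriv F₀ y = F₀ t - F₀ (t/2) :=
      intervalIntegral.integral_deriv_eq_sub (fun y _ => hdiff y)
        (pc.intervalIntegrable _ _)
    have hmon : ∫ y in (t/2)..t, deriv F₀ t ≤ ∫ y in (t/2)..t, deriv F₀ y := by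
      apply intervalIntegral.integral_mono_on (by linarith)
        intervalIntegrable_const (pc.intervalIntegrable _ _)
      intro y hy
      exact pA (le_trans hta hy.1 : y ∈ Ici a) (hta' : t ∈ Ici a) hy.2
    rw [intervalIntegral.integral_const, smul_eq_mul, hint] at hmon
    have hFt : F₀ t < 1 := hend t
    nlinarith [hmon]
  · exact hlim

/-- Under the von Mises condition with index `γ ≥ 0`,
`u p₀(u) / ∫_u^∞ x p₀²(x)/(1 - F₀(x)) dx → 1` as `u → ∞`. -/
theorem vonMises_integral_ratio_one
    (F₀ : ℝ → ℝ) (γ : ℝ) (hγ : 0 ≤ γ)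
    (hcdf : IsCDF F₀) (hend : ∀ x, F₀ x < 1)
    (hdiff : ∀ x, DifferentiableAt ℝ F₀ x)
    (hdiff2 : ∀ x, DifferentiableAt ℝ (deriv F₀) x)
    (hpos : ∀ᶠ x in atTop, 0 < deriv F₀ x)
    (hVM : VonMises F₀ γ) :
    Tendsto
      (fun u => u * deriv F₀ u / ∫ x in Set.Ioi u, x * (deriv F₀ x) ^ 2 / (1 - F₀ x))
      atTop (nhds 1) := by
  have hVM' := hVM
  unfold VonMises at hVM'
  have hA := lemA F₀ γ hend hdiff hdiff2 hpos hVM'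
  have hB := lemB F₀ γ hγ hcdf.2.2 hcdf.1 hend hdiff hdiff2 hpos hVM'
  have pc : Continuous (deriv F₀) := Differentiable.continuous (fun x => hdiff2 x)
  have Fc : Continuous F₀ := Differentiable.continuous (fun x => hdiff x)
  have h1F : ∀ x, 0 < 1 - F₀ x := fun x => by linarith [hend x]
  set p := deriv F₀ with hpdef
  set q : ℝ → ℝ := fun x => x * p x ^ 2 / (1 - F₀ x) with hqdef
  set r : ℝ → ℝ := fun x => -(p x + x * deriv (deriv F₀) x) with hrdef
  have qc : Continuous q := by
    apply Continuous.div (continuous_id.mul (pc.pow 2)) (continuous_const.sub Fc)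
    exact fun x => ne_of_gt (h1F x)
  -- ratio r/q tends to 1
  have hratio : Tendsto (fun x => r x / q x) atTop (nhds 1) := by
    have hs : Tendsto (fun x => -((1 - F₀ x) / (x * p x)
        + (1 - F₀ x) * deriv (deriv F₀) x / (p x) ^ 2)) atTop (nhds 1) := by
      have h := (hA.add hVM').neg
      have : -(γ + (-γ - 1)) = (1:ℝ) := by ring
      rwa [this] at h
    apply hs.congr'
    obtain ⟨a₀, ha₀⟩ := eventually_atTop.mp hpos
    filter_upwards [eventually_ge_atTop (max a₀ 1)] with x hx
    have hp : 0 < p x := ha₀ x (le_trans (le_max_left _ _) hx)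
    have hx0 : (0:ℝ) < x := lt_of_lt_of_le one_pos (le_trans (le_max_right _ _) hx)
    rw [hqdef, hrdef]
    field_simp [hp.ne', hx0.ne', (h1F x).ne']
  rw [Metric.tendsto_atTop]
  intro ε hε
  set δ : ℝ := min (ε/2) (1/2) with hδdef
  have hδ0 : 0 < δ := lt_min (by linarith) (by norm_num)
  have hδ1 : δ ≤ 1/2 := min_le_right _ _
  have hδε : δ < ε := lt_of_le_of_lt (min_le_left _ _) (by linarith)
  have h1δ : 0 < 1 - δ := by linarith
  have h1δ' : 0 < 1 + δ := by linarith
  obtain ⟨a₁, ha₁⟩ := Metric.tendsto_atTop.mp hratio δ hδ0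
  obtain ⟨a₀, ha₀⟩ := eventually_atTop.mp hpos
  set a : ℝ := max a₁ (max a₀ 1) with hadef
  have hpa : ∀ x, a ≤ x → 0 < p x := fun x hx =>
    ha₀ x (le_trans (le_trans (le_max_left a₀ 1) (le_max_right a₁ _)) hx)
  have hxa1 : ∀ x, a ≤ x → (1:ℝ) ≤ x := fun x hx =>
    le_trans (le_trans (le_max_right a₀ 1) (le_max_right a₁ _)) hx
  have hq_pos : ∀ x, a ≤ x → 0 < q x := by
    intro x hx
    exact div_pos (mul_pos (lt_of_lt_of_le one_pos (hxa1 x hx)) (pow_pos (hpa x hx) 2)) (h1F x)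
  have hsand : ∀ x, a ≤ x → (1 - δ) * q x ≤ r x ∧ r x ≤ (1 + δ) * q x := by
    intro x hx
    have hd := ha₁ x (le_trans (le_max_left _ _) hx)
    rw [Real.dist_eq, abs_lt] at hd
    have hq := hq_pos x hx
    constructor
    · have : 1 - δ ≤ r x / q x := by linarith
      calc (1 - δ) * q x ≤ (r x / q x) * q x := by nlinarith
        _ = r x := by field_simp
    · have : r x / q x ≤ 1 + δ := by linarith
      calc r x = (r x / q x) * q x := by field_simp
        _ ≤ (1 + δ) * q x := by nlinarith
  -- derivative of -(x * p x)
  have hderiv : ∀ x : ℝ, HasDerivAt (fun y => -(y * p y)) (r x) x := by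
    intro x
    have h1 : HasDerivAt (fun y => y * p y) (1 * p x + x * deriv (deriv F₀) x) x :=
      (hasDerivAt_id x).mul (hdiff2 x).hasDerivAt
    have h2 := h1.neg
    have : -(1 * p x + x * deriv (deriv F₀) x) = r x := by rw [hrdef]; ring
    rwa [this] at h2
  have htend : Tendsto (fun y => -(y * p y)) atTop (nhds 0) := by
    have := hB.neg
    simpa using this
  refine ⟨a, fun u hu => ?_⟩
  have hrnonneg : ∀ x ∈ Set.Ioi u, 0 ≤ r x := by
    intro x hx
    have hx' : a ≤ x := le_trans hu (le_of_lt hx)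
    have := (hsand x hx').1
    nlinarith [hq_pos x hx']
  have hint : ∫ x in Set.Ioi u, r x = u * p u := by
    have := integral_Ioi_of_hasDerivAt_of_nonneg' (a := u) (g' := r)
      (fun x _ => hderiv x) hrnonneg htend
    rw [this]; ring
  have hrint : IntegrableOn r (Set.Ioi u) :=
    integrableOn_Ioi_deriv_of_nonneg' (fun x _ => hderiv x) hrnonneg htend
  have hqint : IntegrableOn q (Set.Ioi u) := by
    apply Integrable.mono' (hrint.const_mul ((1-δ)⁻¹))
      (qc.aestronglyMeasurable.restrict)
    rw [ae_restrict_iff' measurableSet_Ioi]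
    apply ae_of_all
    intro x hx
    have hx' : a ≤ x := le_trans hu (le_of_lt hx)
    have hq := hq_pos x hx'
    rw [Real.norm_eq_abs, abs_of_pos hq]
    have hle := (hsand x hx').1
    have : q x = (1-δ)⁻¹ * ((1-δ) * q x) := by field_simp
    rw [this]
    exact mul_le_mul_of_nonneg_left hle (inv_nonneg.mpr h1δ.le)
  set G : ℝ := ∫ x in Set.Ioi u, q x with hGdef
  have hlow : (1 - δ) * G ≤ u * p u := by
    rw [← hint, hGdef, ← integral_const_mul]
    exact setIntegral_mono_on (hqint.const_mul _) hrint measurableSet_Ioi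
      (fun x hx => (hsand x (le_trans hu (le_of_lt hx))).1)
  have hhigh : u * p u ≤ (1 + δ) * G := by
    rw [← hint, hGdef, ← integral_const_mul]
    exact setIntegral_mono_on hrint (hqint.const_mul _) measurableSet_Ioi
      (fun x hx => (hsand x (le_trans hu (le_of_lt hx))).2)
  have hup : 0 < u * p u :=
    mul_pos (lt_of_lt_of_le one_pos (hxa1 u hu)) (hpa u hu)
  have hG : 0 < G := by nlinarith
  have hgoal : |u * p u / G - 1| ≤ δ := by
    rw [abs_le]
    constructor
    · have h := (le_div_iff₀ hG).mpr hlow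
      linarith
    · have h := (div_le_iff₀ hG).mpr hhigh
      linarith
  rw [Real.dist_eq]
  calc |u * p u / G - 1| ≤ δ := hgoal
    _ < ε := hδε
end

section
/- Let F₀ be a twice differentiable cdf with infinite right endpoint, eventually positive density p₀ = F₀′, satisfying the von Mises condition with index γ ≥ 0. Then lim_{u→∞} p₀(u) / ∫_u^∞ p₀²(x)/(1 − F₀(x)) dx = γ + 1. -/
open Filter Real MeasureTheory

/-- Under the von Mises condition with index `γ ≥ 0`,
`p₀(u) / ∫_u^∞ p₀²(x)/(1 - F₀(x)) dx → γ + 1` as `u → ∞`. -/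
theorem vonMises_integral_ratio_gamma_add_one
    (F₀ : ℝ → ℝ) (γ : ℝ) (hγ : 0 ≤ γ)
    (hcdf : IsCDF F₀) (hend : ∀ x, F₀ x < 1)
    (hdiff : ∀ x, DifferentiableAt ℝ F₀ x)
    (hdiff2 : ∀ x, DifferentiableAt ℝ (deriv F₀) x)
    (hpos : ∀ᶠ x in atTop, 0 < deriv F₀ x)
    (hVM : VonMises F₀ γ) :
    Tendsto
      (fun u => deriv F₀ u / ∫ x in Set.Ioi u, (deriv F₀ x) ^ 2 / (1 - F₀ x))
      atTop (nhds (γ + 1)) := by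
  obtain ⟨hmono, hbot, htop⟩ := hcdf
  set p := deriv F₀ with hpdef
  have hF1 : ∀ x, 0 < 1 - F₀ x := fun x => by linarith [hend x]
  have hFnonneg : ∀ x, 0 ≤ F₀ x := fun x =>
    le_of_tendsto hbot (eventually_atBot.2 ⟨x, fun y hy => hmono hy⟩)
  have hpcont : Continuous p := by
    rw [continuous_iff_continuousAt]; exact fun x => (hdiff2 x).continuousAt
  have hFcont : Continuous F₀ := by
    rw [continuous_iff_continuousAt]; exact fun x => (hdiff x).continuousAt
  have hpnonneg : ∀ x, 0 ≤ p x := by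
    intro x
    have h := (hdiff x).hasDerivAt
    rw [hasDerivAt_iff_tendsto_slope] at h
    refine ge_of_tendsto h ?_
    filter_upwards [self_mem_nhdsWithin] with y hy
    rcases lt_or_gt_of_ne (hy : y ≠ x) with hlt | hgt
    · rw [slope_def_field, div_nonneg_iff]
      exact Or.inr ⟨by linarith [hmono hlt.le], by linarith⟩
    · rw [slope_def_field]
      exact div_nonneg (by linarith [hmono hgt.le]) (by linarith)
  -- choose a threshold a
  have hev : ∀ᶠ x in atTop, (1 - F₀ x) * deriv p x / p x ^ 2 < -γ - 1 / 2 :=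
    hVM.eventually_lt_const (by linarith)
  obtain ⟨a, ha⟩ := eventually_atTop.1 (hpos.and hev)
  have hp'neg : ∀ x, a ≤ x → deriv p x < 0 := by
    intro x hx
    obtain ⟨hpx, hrx⟩ := ha x hx
    rw [div_lt_iff₀ (by positivity)] at hrx
    nlinarith [hF1 x, sq_nonneg (p x)]
  have hbound : ∀ x, a ≤ x → p x ^ 2 / (1 - F₀ x) ≤ 2 * (-(deriv p x)) := by
    intro x hx
    obtain ⟨hpx, hrx⟩ := ha x hx
    rw [div_lt_iff₀ (by positivity)] at hrx
    rw [div_le_iff₀ (hF1 x)]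
    nlinarith [hF1 x, sq_nonneg (p x)]
  -- p is antitone on [a, ∞) and tends to 0
  have hanti : AntitoneOn p (Set.Ici a) := by
    refine antitoneOn_of_deriv_nonpos (convex_Ici a) hpcont.continuousOn
      (fun x _ => (hdiff2 x).differentiableWithinAt) (fun x hx => ?_)
    rw [interior_Ici] at hx
    exact (hp'neg x hx.le).le
  have hq_anti : Antitone (fun x => p (max x a)) := fun x y hxy =>
    hanti (le_max_right x a) (le_max_right y a) (max_le_max hxy le_rfl)
  have hqbdd : BddBelow (Set.range fun x => p (max x a)) := by
    refine ⟨0, ?_⟩; rintro z ⟨x, rfl⟩; exact hpnonneg _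
  set L := ⨅ x, p (max x a) with hLdef
  have hqL : Tendsto (fun x => p (max x a)) atTop (nhds L) := tendsto_atTop_ciInf hq_anti hqbdd
  have hqp : (fun x => p (max x a)) =ᶠ[atTop] p := by
    filter_upwards [eventually_ge_atTop a] with x hx
    rw [max_eq_left hx]
  have hpL : Tendsto p atTop (nhds L) := hqL.congr' hqp
  have hLnonneg : 0 ≤ L := ge_of_tendsto' hpL hpnonneg
  have hpgeL : ∀ x, a ≤ x → L ≤ p x := by
    intro x hx
    have := ciInf_le hqbdd x
    rwa [max_eq_left hx] at this
  have hL0 : L = 0 := by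
    by_contra hne
    have hLpos : 0 < L := lt_of_le_of_ne hLnonneg (Ne.symm hne)
    have key := (convex_Ici a).mul_sub_le_image_sub_of_le_deriv hFcont.continuousOn
      (fun x _ => (hdiff x).differentiableWithinAt)
      (fun x hx => hpgeL x (by rw [interior_Ici] at hx; exact hx.le))
      a Set.self_mem_Ici (a + 2 / L)
      (by simp [le_add_iff_nonneg_right, le_of_lt, div_pos, hLpos])
      (by linarith [div_pos (by norm_num : (0:ℝ) < 2) hLpos])
    rw [show a + 2 / L - a = 2 / L by ring] at key
    have h2 : L * (2 / L) = 2 := by field_simp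
    rw [h2] at key
    have := hend (a + 2 / L)
    have := hFnonneg a
    linarith
  rw [hL0] at hpL
  -- integrability of -p' on (a, ∞)
  have hint : IntegrableOn (fun x => -(deriv p x)) (Set.Ioi a) := by
    refine integrableOn_Ioi_deriv_of_nonneg (hpcont.neg.continuousWithinAt)
      (fun x _ => ((hdiff2 x).hasDerivAt).neg) (fun x hx => ?_) (l := -0) hpL.neg
    linarith [hp'neg x (le_of_lt hx)]
  -- the integrand g
  set g : ℝ → ℝ := fun x => p x ^ 2 / (1 - F₀ x) with hgdef
  have hg_nonneg : ∀ x, 0 ≤ g x := fun x => div_nonneg (sq_nonneg _) (hF1 x).le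
  have hg_cont : Continuous g :=
    (hpcont.pow 2).div (continuous_const.sub hFcont) (fun x => (hF1 x).ne')
  have hg_int : IntegrableOn g (Set.Ioi a) := by
    refine Integrable.mono' (hint.const_mul 2) hg_cont.aestronglyMeasurable.restrict ?_
    rw [ae_restrict_iff' measurableSet_Ioi]
    refine ae_of_all _ fun x hx => ?_
    rw [Real.norm_eq_abs, abs_of_nonneg (hg_nonneg x)]
    exact hbound x (le_of_lt hx)
  -- splitting of the tail integral
  have hGsplit : ∀ u, a ≤ u →
      (∫ x in Set.Ioi u, g x) = (∫ x in Set.Ioi a, g x) - ∫ x in a..u, g x := by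
    intro u hu
    have hsplit : ∫ x in Set.Ioi a, g x = (∫ x in Set.Ioc a u, g x) + ∫ x in Set.Ioi u, g x := by
      rw [← Set.Ioc_union_Ioi_eq_Ioi hu]
      exact setIntegral_union (Set.Ioc_disjoint_Ioi le_rfl) measurableSet_Ioi
        (hg_int.mono_set Set.Ioc_subset_Ioi_self) (hg_int.mono_set (Set.Ioi_subset_Ioi hu))
    rw [intervalIntegral.integral_of_le hu]
    linarith
  -- tail integral tends to 0
  have hIoi := intervalIntegral_tendsto_integral_Ioi a hg_int tendsto_id
  have hG0 : Tendsto (fun u => ∫ x in Set.Ioi u, g x) atTop (nhds 0) := by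
    have h : Tendsto (fun u => (∫ x in Set.Ioi a, g x) - ∫ x in a..u, g x) atTop (nhds 0) := by
      have := ((tendsto_const_nhds (x := ∫ x in Set.Ioi a, g x)) |>.sub hIoi)
      rwa [sub_self] at this
    refine h.congr' ?_
    filter_upwards [eventually_ge_atTop a] with u hu
    exact (hGsplit u hu).symm
  -- derivative of the tail integral
  have hG_deriv : ∀ᶠ u in atTop,
      HasDerivAt (fun u => ∫ x in Set.Ioi u, g x) (-(g u)) u := by
    filter_upwards [eventually_gt_atTop a] with u hu
    have h2 : HasDerivAt (fun v => ∫ x in a..v, g x) (g u) u :=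
      intervalIntegral.integral_hasDerivAt_right (hg_cont.intervalIntegrable a u)
        hg_cont.aestronglyMeasurable.stronglyMeasurableAtFilter hg_cont.continuousAt
    have h1 : HasDerivAt (fun v => (∫ x in Set.Ioi a, g x) - ∫ x in a..v, g x) (-(g u)) u := by
      exact ((hasDerivAt_const u (∫ x in Set.Ioi a, g x)).sub h2).congr_deriv (zero_sub _)
    refine h1.congr_of_eventuallyEq ?_
    exact Filter.eventuallyEq_of_mem (Ioi_mem_nhds hu) (fun v hv => hGsplit v (le_of_lt hv))
  -- derivatives of p
  have hp_deriv : ∀ᶠ u in atTop, HasDerivAt p (deriv p u) u :=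
    Eventually.of_forall fun u => (hdiff2 u).hasDerivAt
  have hg'ne : ∀ᶠ u in atTop, -(g u) ≠ 0 := by
    filter_upwards [eventually_ge_atTop a] with u hu
    have := (ha u hu).1
    have : 0 < g u := div_pos (by positivity) (hF1 u)
    exact neg_ne_zero.2 this.ne'
  -- limit of the ratio of derivatives
  have hdiv : Tendsto (fun u => deriv p u / -(g u)) atTop (nhds (γ + 1)) := by
    have h := hVM.neg
    rw [show -(-γ - 1) = γ + 1 by ring] at h
    refine h.congr' ?_
    filter_upwards [eventually_ge_atTop a] with u hu
    have hpu : p u ≠ 0 := (ha u hu).1.ne'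
    have hFu : (1 : ℝ) - F₀ u ≠ 0 := (hF1 u).ne'
    rw [hgdef]
    field_simp
    rw [← hpdef, mul_div_assoc, div_self (pow_ne_zero 2 hpu), mul_one]
  exact HasDerivAt.lhopital_zero_atTop hp_deriv hG_deriv hg'ne hpL hG0 hdiv
end

section
/- Let F₀ be a twice differentiable cdf with infinite right endpoint, eventually positive density p₀ = F₀′, satisfying the von Mises condition with index γ = 0. Then lim_{u→∞} (1/(1 − F₀(u))) ∫_u^∞ (x − u) p₀²(x)/(1 − F₀(x)) dx = 1. -/
open Filter Real MeasureTheory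

/-- Under the von Mises condition with index `γ = 0`,
`(1/(1 - F₀(u))) ∫_u^∞ (x - u) p₀²(x)/(1 - F₀(x)) dx → 1` as `u → ∞`. -/
theorem vonMises_gamma_zero_integral_ratio_one
    (F₀ : ℝ → ℝ)
    (hcdf : IsCDF F₀) (hend : ∀ x, F₀ x < 1)
    (hdiff : ∀ x, DifferentiableAt ℝ F₀ x)
    (hdiff2 : ∀ x, DifferentiableAt ℝ (deriv F₀) x)
    (hpos : ∀ᶠ x in atTop, 0 < deriv F₀ x)
    (hVM : VonMises F₀ 0) :
    Tendsto
      (fun u =>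
        (1 / (1 - F₀ u)) * ∫ x in Set.Ioi u, (x - u) * (deriv F₀ x) ^ 2 / (1 - F₀ x))
      atTop (nhds 1) := by
  obtain ⟨hmono, -, htop⟩ := hcdf
  have hq : ∀ x, 0 < 1 - F₀ x := fun x => by linarith [hend x]
  have hFdiff : Differentiable ℝ F₀ := hdiff
  have hF₀cont : Continuous F₀ := hFdiff.continuous
  have hpdiff : Differentiable ℝ (deriv F₀) := hdiff2
  have hpcont : Continuous (deriv F₀) := hpdiff.continuous
  have hVM' : Tendsto (fun x => (1 - F₀ x) * deriv (deriv F₀) x / (deriv F₀ x) ^ 2)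
      atTop (nhds (-1)) := by
    have h := hVM
    unfold VonMises at h
    norm_num at h
    exact h
  -- the derivative of a monotone function is nonnegative
  have hpnn : ∀ x, 0 ≤ deriv F₀ x := by
    intro x
    have h := hasDerivAt_iff_tendsto_slope.mp (hdiff x).hasDerivAt
    have h' : Tendsto (slope F₀ x) (nhdsWithin x (Set.Ioi x)) (nhds (deriv F₀ x)) :=
      h.mono_left (nhdsWithin_mono x fun y hy => ne_of_gt hy)
    refine ge_of_tendsto h' ?_
    filter_upwards [self_mem_nhdsWithin] with y hy
    have hyx : (0:ℝ) < y - x := by simpa [sub_pos] using hy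
    rw [slope_def_field]
    exact div_nonneg (by linarith [hmono (le_of_lt (Set.mem_Ioi.mp hy))]) hyx.le
  -- region where p > 0 and p' < 0
  have hpp' : ∀ᶠ x in atTop, 0 < deriv F₀ x ∧ deriv (deriv F₀) x < 0 := by
    have h1 : ∀ᶠ x in atTop,
        (1 - F₀ x) * deriv (deriv F₀) x / (deriv F₀ x) ^ 2 < -(1/2) :=
      hVM'.eventually_lt_const (by norm_num)
    filter_upwards [hpos, h1] with x hx1 hx2
    refine ⟨hx1, ?_⟩
    by_contra hcon
    push_neg at hcon
    have h3 : 0 ≤ (1 - F₀ x) * deriv (deriv F₀) x / (deriv F₀ x) ^ 2 :=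
      div_nonneg (mul_nonneg (hq x).le hcon) (by positivity)
    linarith
  obtain ⟨U₀, hU₀⟩ := eventually_atTop.mp hpp'
  -- p is antitone on [U₀, ∞)
  have hanti : AntitoneOn (deriv F₀) (Set.Ici U₀) := by
    apply antitoneOn_of_deriv_nonpos (convex_Ici U₀) hpcont.continuousOn
      hpdiff.differentiableOn
    intro x hx
    rw [interior_Ici] at hx
    exact (hU₀ x (le_of_lt hx)).2.le
  -- MVT consequence: for U₀ ≤ y < x, (x - y) * p x ≤ F₀ x - F₀ y
  have hslope : ∀ y x : ℝ, U₀ ≤ y → y < x → (x - y) * deriv F₀ x ≤ F₀ x - F₀ y := by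
    intro y x hy hyx
    obtain ⟨c, hc, hceq⟩ := exists_hasDerivAt_eq_slope F₀ (deriv F₀) hyx
      hF₀cont.continuousOn (fun z _ => (hdiff z).hasDerivAt)
    have hcx : deriv F₀ x ≤ deriv F₀ c :=
      hanti (Set.mem_Ici.mpr (le_trans hy hc.1.le)) (Set.mem_Ici.mpr (le_trans hy hyx.le))
        hc.2.le
    have h1 : deriv F₀ x ≤ (F₀ x - F₀ y) / (x - y) := hceq ▸ hcx
    have h2 : 0 < x - y := by linarith
    calc (x - y) * deriv F₀ x ≤ (x - y) * ((F₀ x - F₀ y) / (x - y)) := by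
          exact mul_le_mul_of_nonneg_left h1 h2.le
      _ = F₀ x - F₀ y := by field_simp
  -- p tends to 0
  have hp0 : Tendsto (deriv F₀) atTop (nhds 0) := by
    have hub : ∀ᶠ x in atTop, deriv F₀ x ≤ (1 - F₀ U₀) / (x - U₀) := by
      filter_upwards [eventually_gt_atTop U₀] with x hx
      have h1 := hslope U₀ x le_rfl hx
      rw [le_div_iff₀ (by linarith : (0:ℝ) < x - U₀)]
      have := (hend x)
      nlinarith
    have hg0 : Tendsto (fun x : ℝ => (1 - F₀ U₀) / (x - U₀)) atTop (nhds 0) :=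
      Tendsto.div_atTop tendsto_const_nhds (tendsto_atTop_add_const_right _ _ tendsto_id)
    exact squeeze_zero' (Eventually.of_forall fun x => hpnn x) hub hg0
  -- x * p x tends to 0
  have hxp0 : Tendsto (fun x => x * deriv F₀ x) atTop (nhds 0) := by
    rw [Metric.tendsto_nhds]
    intro η hη
    have hF : ∀ᶠ y in atTop, 1 - F₀ y < η / 2 := by
      have := htop.eventually (eventually_gt_nhds (by linarith : 1 - η/2 < 1))
      filter_upwards [this] with y hy
      linarith
    obtain ⟨y, hy⟩ := (hF.and ((eventually_ge_atTop U₀).and (eventually_ge_atTop 0))).exists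
    obtain ⟨hy1, hy2, hy3⟩ := hy
    have hyp : Tendsto (fun x => y * deriv F₀ x) atTop (nhds 0) := by
      simpa using hp0.const_mul y
    have hyp' : ∀ᶠ x in atTop, y * deriv F₀ x < η / 2 :=
      hyp.eventually_lt_const (by linarith)
    filter_upwards [eventually_gt_atTop y, eventually_ge_atTop (0:ℝ), hyp'] with x hx1 hx2 hx3
    have h1 := hslope y x hy2 hx1
    have h2 : x * deriv F₀ x = (x - y) * deriv F₀ x + y * deriv F₀ x := by ring
    have h3 : 0 ≤ x * deriv F₀ x := mul_nonneg hx2 (hpnn x)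
    rw [Real.dist_eq, sub_zero, abs_of_nonneg h3]
    have := hend x
    nlinarith
  -- the key uniform estimate
  have key : ∀ δ : ℝ, 0 < δ → δ < 1 → ∀ᶠ u in atTop,
      1 / (1 + δ) ≤ (1 / (1 - F₀ u)) * ∫ x in Set.Ioi u,
        (x - u) * (deriv F₀ x) ^ 2 / (1 - F₀ x) ∧
      (1 / (1 - F₀ u)) * (∫ x in Set.Ioi u,
        (x - u) * (deriv F₀ x) ^ 2 / (1 - F₀ x)) ≤ 1 / (1 - δ) := by
    intro δ hδ0 hδ1
    have hbnd : ∀ᶠ x in atTop, 0 < deriv F₀ x ∧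
        |(1 - F₀ x) * deriv (deriv F₀) x / (deriv F₀ x) ^ 2 + 1| < δ := by
      have h1 := (Metric.tendsto_nhds.mp hVM') δ hδ0
      filter_upwards [hpos, h1] with x hx1 hx2
      refine ⟨hx1, ?_⟩
      rw [Real.dist_eq, sub_neg_eq_add] at hx2
      exact hx2
    obtain ⟨U, hU⟩ := eventually_atTop.mp (hbnd.and (eventually_ge_atTop U₀))
    filter_upwards [eventually_ge_atTop U] with u hu
    have hqu : 0 < 1 - F₀ u := hq u
    -- the antiderivative
    set g : ℝ → ℝ := fun x => F₀ x - (x - u) * deriv F₀ x with hgdef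
    have hg : ∀ x ∈ Set.Ioi u, HasDerivAt g (-((x - u) * deriv (deriv F₀) x)) x := by
      intro x _
      have h1 : HasDerivAt F₀ (deriv F₀ x) x := (hdiff x).hasDerivAt
      have h2 : HasDerivAt (fun x => (x - u) * deriv F₀ x)
          (1 * deriv F₀ x + (x - u) * deriv (deriv F₀) x) x :=
        ((hasDerivAt_id x).sub_const u).mul (hdiff2 x).hasDerivAt
      have := h1.sub h2
      exact (this : HasDerivAt g _ x).congr_deriv (by ring)
    have hgpos : ∀ x ∈ Set.Ioi u, 0 ≤ -((x - u) * deriv (deriv F₀) x) := by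
      intro x hx
      have hxu : u ≤ x := (Set.mem_Ioi.mp hx).le
      have hxU : U ≤ x := le_trans hu hxu
      have hd := (hU₀ x (hU x hxU).2).2
      have h1 : 0 ≤ x - u := by linarith [Set.mem_Ioi.mp hx]
      nlinarith
    have hgl : Tendsto g atTop (nhds 1) := by
      have h1 : Tendsto (fun x => (x - u) * deriv F₀ x) atTop (nhds 0) := by
        have h := hxp0.sub (hp0.const_mul u)
        norm_num at h
        exact h.congr fun x => by ring
      have := htop.sub h1
      simpa using this
    have hgcont : ContinuousWithinAt g (Set.Ici u) u :=
      ((hF₀cont.sub ((continuous_id.sub continuous_const).mul hpcont))).continuousWithinAt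
    have hint' : IntegrableOn (fun x => -((x - u) * deriv (deriv F₀) x)) (Set.Ioi u) :=
      integrableOn_Ioi_deriv_of_nonneg hgcont hg hgpos hgl
    have heq : (∫ x in Set.Ioi u, -((x - u) * deriv (deriv F₀) x)) = 1 - F₀ u := by
      have h := integral_Ioi_of_hasDerivAt_of_nonneg hgcont hg hgpos hgl
      rw [h, hgdef]
      simp
    -- pointwise bounds
    have hptws : ∀ x ∈ Set.Ioi u,
        (1 - δ) * ((x - u) * (deriv F₀ x) ^ 2 / (1 - F₀ x)) ≤
          -((x - u) * deriv (deriv F₀) x) ∧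
        -((x - u) * deriv (deriv F₀) x) ≤
          (1 + δ) * ((x - u) * (deriv F₀ x) ^ 2 / (1 - F₀ x)) := by
      intro x hx
      have hxu : u ≤ x := (Set.mem_Ioi.mp hx).le
      have hxU : U ≤ x := le_trans hu hxu
      obtain ⟨⟨hpx, habs⟩, -⟩ := hU x hxU
      have hqx : 0 < 1 - F₀ x := hq x
      have hP : 0 < (deriv F₀ x) ^ 2 := by positivity
      have hA : 0 ≤ x - u := by linarith [Set.mem_Ioi.mp hx]
      rw [abs_lt] at habs
      have h1 : (1 - F₀ x) * deriv (deriv F₀) x < (δ - 1) * (deriv F₀ x) ^ 2 :=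
        (div_lt_iff₀ hP).mp (by linarith [habs.2] :
          (1 - F₀ x) * deriv (deriv F₀) x / (deriv F₀ x) ^ 2 < δ - 1)
      have h2 : (-1 - δ) * (deriv F₀ x) ^ 2 < (1 - F₀ x) * deriv (deriv F₀) x :=
        (lt_div_iff₀ hP).mp (by linarith [habs.1] :
          -1 - δ < (1 - F₀ x) * deriv (deriv F₀) x / (deriv F₀ x) ^ 2)
      constructor
      · rw [show (1 - δ) * ((x - u) * (deriv F₀ x) ^ 2 / (1 - F₀ x)) =
          (1 - δ) * ((x - u) * (deriv F₀ x) ^ 2) / (1 - F₀ x) by ring,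
          div_le_iff₀ hqx]
        nlinarith [mul_le_mul_of_nonneg_left h1.le hA]
      · rw [show (1 + δ) * ((x - u) * (deriv F₀ x) ^ 2 / (1 - F₀ x)) =
          (1 + δ) * ((x - u) * (deriv F₀ x) ^ 2) / (1 - F₀ x) by ring,
          le_div_iff₀ hqx]
        nlinarith [mul_le_mul_of_nonneg_left h2.le hA]
    -- integrability of the target integrand
    have hmy : IntegrableOn (fun x => (x - u) * (deriv F₀ x) ^ 2 / (1 - F₀ x))
        (Set.Ioi u) := by
      have hcont : Continuous (fun x => (x - u) * (deriv F₀ x) ^ 2 / (1 - F₀ x)) := by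
        apply Continuous.div
        · exact (continuous_id.sub continuous_const).mul (hpcont.pow 2)
        · exact continuous_const.sub hF₀cont
        · exact fun x => (hq x).ne'
      refine Integrable.mono'
        (hint'.const_mul (1 / (1 - δ))) hcont.aestronglyMeasurable.restrict ?_
      rw [ae_restrict_iff' measurableSet_Ioi]
      refine Eventually.of_forall fun x hx => ?_
      have hxu : u ≤ x := (Set.mem_Ioi.mp hx).le
      have hA : 0 ≤ x - u := by linarith [Set.mem_Ioi.mp hx]
      have hnn : 0 ≤ (x - u) * (deriv F₀ x) ^ 2 / (1 - F₀ x) := by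
        have := hq x
        positivity
      rw [Real.norm_eq_abs, abs_of_nonneg hnn]
      have h1 := (hptws x hx).1
      rw [div_mul_eq_mul_div, le_div_iff₀ (by linarith : (0:ℝ) < 1 - δ)]
      linarith
    -- integral bounds
    have hI1 : (1 - δ) * (∫ x in Set.Ioi u, (x - u) * (deriv F₀ x) ^ 2 / (1 - F₀ x)) ≤
        1 - F₀ u := by
      rw [← heq, ← MeasureTheory.integral_const_mul]
      exact setIntegral_mono_on (hmy.const_mul _) hint' measurableSet_Ioi
        fun x hx => (hptws x hx).1
    have hI2 : 1 - F₀ u ≤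
        (1 + δ) * (∫ x in Set.Ioi u, (x - u) * (deriv F₀ x) ^ 2 / (1 - F₀ x)) := by
      rw [← heq, ← MeasureTheory.integral_const_mul]
      exact setIntegral_mono_on hint' (hmy.const_mul _) measurableSet_Ioi
        fun x hx => (hptws x hx).2
    set I := ∫ x in Set.Ioi u, (x - u) * (deriv F₀ x) ^ 2 / (1 - F₀ x)
    have hrw : (1 / (1 - F₀ u)) * I = I / (1 - F₀ u) := by ring
    constructor
    · rw [hrw, div_le_div_iff₀ (by linarith : (0:ℝ) < 1 + δ) hqu]
      linarith
    · rw [hrw, div_le_div_iff₀ hqu (by linarith : (0:ℝ) < 1 - δ)]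
      linarith
  -- conclusion
  rw [Metric.tendsto_nhds]
  intro ε hε
  set δ := min (1/2) (ε/3) with hδdef
  have hδ0 : 0 < δ := lt_min (by norm_num) (by linarith)
  have hδh : δ ≤ 1/2 := min_le_left _ _
  have hδε : δ ≤ ε/3 := min_le_right _ _
  have hδ1 : δ < 1 := by linarith
  filter_upwards [key δ hδ0 hδ1] with u hu
  obtain ⟨h1, h2⟩ := hu
  rw [Real.dist_eq, abs_lt]
  have hd1 : 0 < 1 + δ := by linarith
  have hd2 : 0 < 1 - δ := by linarith
  constructor
  · have : 1 - ε < 1 / (1 + δ) := by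
      rw [lt_div_iff₀ hd1]
      nlinarith
    linarith
  · have : 1 / (1 - δ) < 1 + ε := by
      rw [div_lt_iff₀ hd2]
      nlinarith
    linarith
end

section
/- Let F₀ be a twice differentiable cdf with infinite right endpoint, eventually positive density p₀ = F₀′, satisfying the von Mises condition with index γ ≥ 0. Then lim_{u→∞} [u² p₀²(u)/(1 − F₀(u))] / ∫_u^∞ 2 x² p₀³(x)/(1 − F₀(x))² dx = 1/2. -/
open Filter Real MeasureTheory Topology

lemma tendsto_div_atTop_of_hasDerivAt {f f' : ℝ → ℝ} {L : ℝ}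
    (hf : ∀ᶠ x in atTop, HasDerivAt f (f' x) x)
    (hf' : Tendsto f' atTop (𝓝 L)) :
    Tendsto (fun x => f x / x) atTop (𝓝 L) := by
  rw [Metric.tendsto_atTop]
  intro ε hε
  have hε4 : 0 < ε / 4 := by positivity
  have h2 : ∀ᶠ x in atTop, HasDerivAt f (f' x) x ∧ |f' x - L| ≤ ε / 4 := by
    filter_upwards [hf, hf'.eventually (Metric.closedBall_mem_nhds L hε4)] with x h1 h2
    exact ⟨h1, by simpa [Real.dist_eq] using h2⟩
  obtain ⟨c, hc⟩ := eventually_atTop.mp h2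
  -- MVT on Ici c for x ↦ f x - L * x
  have key : ∀ x ≥ c, |f x - L * x - (f c - L * c)| ≤ ε / 4 * (x - c) := by
    intro x hx
    have := Convex.norm_image_sub_le_of_norm_hasDerivWithin_le
      (f := fun y => f y - L * y) (f' := fun y => f' y - L) (s := Set.Ici c) (C := ε / 4)
      (fun y hy => (((hc y hy).1.sub ((hasDerivAt_id y).const_mul L)).hasDerivWithinAt).congr_deriv
        (by ring))
      (fun y hy => by simpa [Real.norm_eq_abs] using (hc y hy).2)
      (convex_Ici c) Set.self_mem_Ici hx
    simpa [Real.norm_eq_abs, abs_of_nonneg (sub_nonneg.mpr hx)] using this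
  set C := |f c - L * c| + ε / 4 * |c| with hC
  have hCnn : 0 ≤ C := by positivity
  clear_value C
  refine ⟨max (max c 1) (4 * C / ε + 1), fun x hx => ?_⟩
  have hxc : c ≤ x := le_trans (le_trans (le_max_left _ _) (le_max_left _ _)) hx
  have hx1 : (1:ℝ) ≤ x := le_trans (le_trans (le_max_right _ _) (le_max_left _ _)) hx
  have hx0 : 0 < x := lt_of_lt_of_le one_pos hx1
  have hxC : 4 * C / ε + 1 ≤ x := le_trans (le_max_right _ _) hx
  have h1 : |f x - L * x| ≤ ε / 4 * x + C := by
    have hk := key x hxc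
    have habs : |f x - L * x| ≤ |f x - L * x - (f c - L * c)| + |f c - L * c| := by
      calc |f x - L * x| = |(f x - L * x - (f c - L * c)) + (f c - L * c)| := by ring_nf
        _ ≤ _ := abs_add_le _ _
    have h5 : |f x - L * x| ≤ ε / 4 * (x - c) + |f c - L * c| := le_trans habs (by linarith)
    have hxc' : ε / 4 * (x - c) ≤ ε / 4 * x + ε / 4 * |c| := by
      have : -|c| ≤ c := neg_abs_le c
      nlinarith
    rw [hC]; linarith
  have hdist : dist (f x / x) L = |f x - L * x| / x := by
    have hne : f x / x - L = (f x - L * x) / x := by field_simp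
    rw [Real.dist_eq, hne, abs_div, abs_of_pos hx0]
  rw [hdist]
  have h4 : 4 * C ≤ x * ε := (div_le_iff₀ hε).mp (by linarith)
  have hC' : C / x ≤ ε / 4 := by
    rw [div_le_iff₀ hx0]; nlinarith
  have h6 : |f x - L * x| / x ≤ ε / 4 + C / x := by
    rw [div_le_iff₀ hx0]
    have hid : (ε / 4 + C / x) * x = ε / 4 * x + C := by field_simp
    rw [hid]; exact h1
  calc |f x - L * x| / x ≤ ε / 4 + C / x := h6
    _ ≤ ε / 4 + ε / 4 := by linarith
    _ < ε := by linarith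

lemma aux_field_id (x s pp qq : ℝ) (hx : x ≠ 0) (hs : s ≠ 0) (hp : pp ≠ 0) :
    ((2 * x * pp ^ 2 + x ^ 2 * (2 * pp ^ 1 * qq)) * s - x ^ 2 * pp ^ 2 * (-pp)) / s ^ 2
      = (2 * x ^ 2 * pp ^ 3 / s ^ 2) * (s / (x * pp) + s * qq / pp ^ 2 + 1 / 2) := by
  field_simp
  ring


/-- Under the von Mises condition with index `γ ≥ 0`,
`[u² p₀²(u)/(1 - F₀(u))] / ∫_u^∞ 2x² p₀³(x)/(1 - F₀(x))² dx → 1/2` as `u → ∞`. -/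
theorem vonMises_integral_ratio_half
    (F₀ : ℝ → ℝ) (γ : ℝ) (hγ : 0 ≤ γ)
    (hcdf : IsCDF F₀) (hend : ∀ x, F₀ x < 1)
    (hdiff : ∀ x, DifferentiableAt ℝ F₀ x)
    (hdiff2 : ∀ x, DifferentiableAt ℝ (deriv F₀) x)
    (hpos : ∀ᶠ x in atTop, 0 < deriv F₀ x)
    (hVM : VonMises F₀ γ) :
    Tendsto
      (fun u =>
        (u ^ 2 * (deriv F₀ u) ^ 2 / (1 - F₀ u)) /
          ∫ x in Set.Ioi u, 2 * x ^ 2 * (deriv F₀ x) ^ 3 / (1 - F₀ x) ^ 2)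
      atTop (nhds (1 / 2)) := by
  obtain ⟨hmono, hbot, htop⟩ := hcdf
  set p : ℝ → ℝ := deriv F₀ with hpdef
  set q : ℝ → ℝ := deriv (deriv F₀) with hqdef
  set S : ℝ → ℝ := fun x => 1 - F₀ x with hSdef
  have hS : ∀ x, 0 < S x := fun x => sub_pos.mpr (hend x)
  have hSd : ∀ x, HasDerivAt S (-(p x)) x := fun x => by
    simpa using ((hdiff x).hasDerivAt.const_sub 1)
  have hpd : ∀ x, HasDerivAt p (q x) x := fun x => (hdiff2 x).hasDerivAt
  have hFc : Continuous F₀ := continuous_iff_continuousAt.mpr fun x => (hdiff x).continuousAt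
  have hpc : Continuous p := continuous_iff_continuousAt.mpr fun x => (hdiff2 x).continuousAt
  have hSc : Continuous S := continuous_const.sub hFc
  have hS0 : Tendsto S atTop (𝓝 0) := by
    have : Tendsto (fun x => 1 - F₀ x) atTop (𝓝 (1 - 1)) :=
      (tendsto_const_nhds (x := (1:ℝ))).sub htop
    simpa using this
  have hVM' : Tendsto (fun x => S x * q x / (p x) ^ 2) atTop (𝓝 (-γ - 1)) := hVM
  -- Step A : S u / (u * p u) → γ
  have hAd : ∀ x, p x ≠ 0 →
      HasDerivAt (fun y => S y / p y) (-1 - S x * q x / (p x) ^ 2) x := by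
    intro x hx
    have := (hSd x).div (hpd x) hx
    refine this.congr_deriv ?_
    field_simp
  have hA' : Tendsto (fun x => -1 - S x * q x / (p x) ^ 2) atTop (𝓝 γ) := by
    have h := (tendsto_const_nhds (x := (-1 : ℝ))).sub hVM'
    have : (-1 : ℝ) - (-γ - 1) = γ := by ring
    rwa [this] at h
  have hAu : Tendsto (fun u => S u / p u / u) atTop (𝓝 γ) := by
    refine tendsto_div_atTop_of_hasDerivAt ?_ hA'
    filter_upwards [hpos] with x hx
    exact hAd x hx.ne'
  have hgamma : Tendsto (fun u => S u / (u * p u)) atTop (𝓝 γ) :=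
    hAu.congr fun u => by rw [div_div, mul_comm]
  -- Step B : the derivative of g
  set g : ℝ → ℝ := fun x => x ^ 2 * (p x) ^ 2 / S x with hgdef
  set h : ℝ → ℝ := fun x => 2 * x ^ 2 * (p x) ^ 3 / (S x) ^ 2 with hhdef
  set D : ℝ → ℝ := fun x =>
    ((2 * x * (p x) ^ 2 + x ^ 2 * (2 * p x ^ 1 * q x)) * S x -
      x ^ 2 * (p x) ^ 2 * (-(p x))) / (S x) ^ 2 with hDdef
  have hgd : ∀ x, HasDerivAt g (D x) x := by
    intro x
    have hN : HasDerivAt (fun y => y ^ 2 * (p y) ^ 2)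
        (2 * x * (p x) ^ 2 + x ^ 2 * (2 * p x ^ 1 * q x)) x := by
      have h1 : HasDerivAt (fun y : ℝ => y ^ 2) (2 * x) x := by
        simpa using hasDerivAt_pow 2 x
      have h2 : HasDerivAt (fun y => (p y) ^ 2) (2 * p x ^ 1 * q x) x :=
        (hpd x).pow 2
      exact (h1.mul h2).congr_deriv (by ring)
    exact hN.div (hSd x) (hS x).ne'
  -- relation D = h * R with R → -1/2
  set R : ℝ → ℝ := fun x => S x / (x * p x) + S x * q x / (p x) ^ 2 + 1 / 2 with hRdef
  have hDR : ∀ x, 0 < x → 0 < p x → D x = h x * R x := by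
    intro x hx hpx
    have := aux_field_id x (S x) (p x) (q x) hx.ne' (hS x).ne' hpx.ne'
    simpa [hDdef, hhdef, hRdef] using this
  have hR : Tendsto R atTop (𝓝 (-(1 / 2))) := by
    have h1 := (hgamma.add hVM').add (tendsto_const_nhds (x := (1/2 : ℝ)))
    have : γ + (-γ - 1) + 1 / 2 = -(1/2) := by ring
    rwa [this] at h1
  have hhc : Continuous h :=
    ((continuous_const.mul (continuous_pow 2)).mul (hpc.pow 3)).div (hSc.pow 2)
      (fun x => pow_ne_zero _ (hS x).ne')
  have hqm : Measurable q := measurable_deriv _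
  have hDm : Measurable D := by
    refine Measurable.div ?_ ((hSc.measurable).pow_const 2)
    refine Measurable.sub ?_ ?_
    · refine Measurable.mul ?_ hSc.measurable
      refine Measurable.add ?_ ?_
      · exact (measurable_const.mul measurable_id).mul ((hpc.measurable).pow_const 2)
      · exact ((measurable_id.pow_const 2)).mul
          ((measurable_const.mul ((hpc.measurable).pow_const 1)).mul hqm)
    · exact (((measurable_id.pow_const 2)).mul ((hpc.measurable).pow_const 2)).mul
        (hpc.measurable.neg)
  have hev : ∀ ε : ℝ, 0 < ε → ∀ᶠ x in atTop, 0 < x ∧ 0 < p x ∧ |R x + 1 / 2| ≤ ε := by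
    intro ε hε
    have hRev : ∀ᶠ x in atTop, |R x + 1 / 2| ≤ ε := by
      have := hR.eventually (Metric.closedBall_mem_nhds (-(1/2) : ℝ) hε)
      filter_upwards [this] with x hx
      simpa [Real.dist_eq, sub_neg_eq_add] using hx
    filter_upwards [eventually_gt_atTop 0, hpos, hRev] with x h1 h2 h3
    exact ⟨h1, h2, h3⟩
  -- main sandwich estimate on intervals
  have hfacts : ∀ ε c : ℝ, 0 < ε → ε ≤ 1 / 4 →
      (∀ x ≥ c, 0 < x ∧ 0 < p x ∧ |R x + 1 / 2| ≤ ε) →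
      ∀ u v : ℝ, c ≤ u → u ≤ v →
        (1 / 2 - ε) * (∫ x in u..v, h x) ≤ g u - g v ∧
          g u - g v ≤ (1 / 2 + ε) * (∫ x in u..v, h x) := by
    intro ε c hε hε4 hc u v hcu huv
    have habs : ∀ r : ℝ, |r + 1 / 2| ≤ ε → |r| ≤ 1 ∧ r ≤ -(1 / 2 - ε) ∧ -(1 / 2 + ε) ≤ r := by
      intro r hr
      obtain ⟨h1, h2⟩ := abs_le.mp hr
      exact ⟨abs_le.mpr ⟨by linarith, by linarith⟩, by linarith, by linarith⟩
    have hmem : ∀ x ∈ Set.Icc u v, x ≥ c := fun x hx => le_trans hcu hx.1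
    have hhnn : ∀ x ∈ Set.Icc u v, 0 ≤ h x := by
      intro x hx
      obtain ⟨hx0, hpx, -⟩ := hc x (hmem x hx)
      have := (hS x)
      positivity
    have hih : IntervalIntegrable h volume u v := (hhc.intervalIntegrable u v)
    have hiD : IntervalIntegrable D volume u v := by
      refine hih.mono_fun (hDm.aestronglyMeasurable) ?_
      rw [Set.uIoc_of_le huv]
      refine (ae_restrict_iff' measurableSet_Ioc).mpr (ae_of_all _ fun x hx => ?_)
      obtain ⟨hx0, hpx, hRx⟩ := hc x (le_trans hcu (le_of_lt hx.1))
      have hhx : 0 ≤ h x := by have := hS x; positivity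
      show ‖D x‖ ≤ ‖h x‖
      rw [Real.norm_eq_abs, Real.norm_eq_abs, hDR x hx0 hpx, abs_mul, abs_of_nonneg hhx]
      exact mul_le_of_le_one_right hhx (habs _ hRx).1
    have hFTC : ∫ x in u..v, D x = g v - g u :=
      intervalIntegral.integral_eq_sub_of_hasDerivAt (fun x _ => hgd x) hiD
    have hup : ∫ x in u..v, D x ≤ (-(1 / 2 - ε)) * ∫ x in u..v, h x := by
      rw [← intervalIntegral.integral_const_mul]
      refine intervalIntegral.integral_mono_on huv hiD (hih.const_mul _) fun x hx => ?_
      obtain ⟨hx0, hpx, hRx⟩ := hc x (hmem x hx)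
      rw [hDR x hx0 hpx]
      exact (mul_le_mul_of_nonneg_left (habs _ hRx).2.1 (hhnn x hx)).trans_eq (mul_comm _ _)
    have hlo : (-(1 / 2 + ε)) * ∫ x in u..v, h x ≤ ∫ x in u..v, D x := by
      rw [← intervalIntegral.integral_const_mul]
      refine intervalIntegral.integral_mono_on huv (hih.const_mul _) hiD fun x hx => ?_
      obtain ⟨hx0, hpx, hRx⟩ := hc x (hmem x hx)
      rw [hDR x hx0 hpx]
      exact (mul_comm _ _).trans_le (mul_le_mul_of_nonneg_left (habs _ hRx).2.2 (hhnn x hx))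
    rw [hFTC] at hup hlo
    exact ⟨by linarith, by linarith⟩
  -- Global phase with ε = 1/4
  obtain ⟨c₀, hc₀⟩ := eventually_atTop.mp (hev (1/4) (by norm_num))
  have hgnn : ∀ x, 0 ≤ g x := by
    intro x
    have := hS x
    show (0:ℝ) ≤ x ^ 2 * p x ^ 2 / S x
    positivity
  have hhnn' : ∀ x ≥ c₀, 0 ≤ h x := by
    intro x hx
    obtain ⟨hx0, hpx, -⟩ := hc₀ x hx
    have := hS x
    show (0:ℝ) ≤ 2 * x ^ 2 * p x ^ 3 / S x ^ 2
    positivity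
  have hintnn : ∀ u v, c₀ ≤ u → u ≤ v → 0 ≤ ∫ x in u..v, h x := by
    intro u v hu huv
    exact intervalIntegral.integral_nonneg huv fun x hx => hhnn' x (le_trans hu hx.1)
  have hganti : AntitoneOn g (Set.Ici c₀) := by
    intro u hu v hv huv
    have h1 := (hfacts (1/4) c₀ (by norm_num) le_rfl hc₀ u v hu huv).1
    have h2 := hintnn u v hu huv
    have : (0:ℝ) ≤ (1/2 - 1/4) * ∫ x in u..v, h x := mul_nonneg (by norm_num) h2
    linarith
  have hGanti : Antitone fun x => g (max x c₀) := by
    intro a b hab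
    exact hganti (le_max_right a c₀) (le_max_right b c₀) (max_le_max hab le_rfl)
  have hGbdd : BddBelow (Set.range fun x => g (max x c₀)) :=
    ⟨0, by rintro y ⟨x, rfl⟩; exact hgnn _⟩
  have hGtend := tendsto_atTop_ciInf hGanti hGbdd
  set L : ℝ := ⨅ x : ℝ, g (max x c₀) with hLdef
  have hgL : Tendsto g atTop (𝓝 L) := by
    refine hGtend.congr' ?_
    filter_upwards [eventually_ge_atTop c₀] with x hx
    rw [max_eq_left hx]
  have hLnn : 0 ≤ L := ge_of_tendsto hgL (Eventually.of_forall hgnn)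
  have hgeL : ∀ x ≥ c₀, L ≤ g x := by
    intro x hx
    refine le_of_tendsto hgL ?_
    filter_upwards [eventually_ge_atTop x] with y hy
    exact hganti hx (le_trans hx hy) hy
  -- integrability of h on Ioi u
  have hIbound : ∀ u v, c₀ ≤ u → u ≤ v → (∫ x in u..v, h x) ≤ 4 * g u := by
    intro u v hu hv
    have h1 := (hfacts (1/4) c₀ (by norm_num) le_rfl hc₀ u v hu hv).1
    have h2 := hgnn v
    linarith
  have hInt : ∀ u ≥ c₀, IntegrableOn h (Set.Ioi u) := by
    intro u hu
    refine integrableOn_Ioi_of_intervalIntegral_norm_bounded (4 * g u) u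
      (fun v : ℝ => hhc.integrableOn_Ioc) tendsto_id ?_
    filter_upwards [eventually_ge_atTop u] with v hv
    simp only [id_eq]
    have heq : ∫ x in u..v, ‖h x‖ = ∫ x in u..v, h x := by
      refine intervalIntegral.integral_congr fun x hx => ?_
      rw [Set.uIcc_of_le hv] at hx
      exact Real.norm_of_nonneg (hhnn' x (le_trans hu hx.1))
    rw [heq]
    exact hIbound u v hu hv
  have hIlim : ∀ u ≥ c₀, Tendsto (fun v => ∫ x in u..v, h x) atTop
      (𝓝 (∫ x in Set.Ioi u, h x)) := fun u hu =>
    intervalIntegral_tendsto_integral_Ioi u (hInt u hu) tendsto_id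
  -- the limit L is zero
  have hpS_cont : Continuous fun x => 2 * L * (p x / S x) :=
    continuous_const.mul (hpc.div hSc fun x => (hS x).ne')
  have hL0 : L = 0 := by
    rcases eq_or_lt_of_le hLnn with hE | hLpos
    · exact hE.symm
    exfalso
    have hlow : ∀ x ≥ c₀, 2 * L * (p x / S x) ≤ h x := by
      intro x hx
      obtain ⟨hx0, hpx, -⟩ := hc₀ x hx
      have hgx := hgeL x hx
      have hSx := hS x
      have hhg : h x = g x * (2 * (p x / S x)) := by
        show 2 * x ^ 2 * p x ^ 3 / S x ^ 2 = x ^ 2 * p x ^ 2 / S x * (2 * (p x / S x))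
        field_simp
      rw [hhg]
      have hpSnn : (0:ℝ) ≤ 2 * (p x / S x) := by positivity
      calc 2 * L * (p x / S x) = L * (2 * (p x / S x)) := by ring
        _ ≤ g x * (2 * (p x / S x)) := mul_le_mul_of_nonneg_right hgx hpSnn
    have hlog : ∀ v, ∫ x in c₀..v, 2 * L * (p x / S x)
        = 2 * L * (Real.log (S c₀) - Real.log (S v)) := by
      intro v
      have hd : ∀ x : ℝ, HasDerivAt (fun y => -(2 * L * Real.log (S y)))
          (2 * L * (p x / S x)) x := by
        intro x
        have h1 := (((hSd x).log (hS x).ne').const_mul (2 * L)).neg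
        refine h1.congr_deriv ?_
        ring
      have hint : IntervalIntegrable (fun x => 2 * L * (p x / S x)) volume c₀ v :=
        hpS_cont.intervalIntegrable _ _
      rw [intervalIntegral.integral_eq_sub_of_hasDerivAt (fun x _ => hd x) hint]
      ring
    have hbound : ∀ v ≥ c₀, 2 * L * (Real.log (S c₀) - Real.log (S v)) ≤ 4 * g c₀ := by
      intro v hv
      rw [← hlog v]
      have h1 : ∫ x in c₀..v, 2 * L * (p x / S x) ≤ ∫ x in c₀..v, h x := by
        refine intervalIntegral.integral_mono_on hv (hpS_cont.intervalIntegrable _ _)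
          (hhc.intervalIntegrable _ _) fun x hx => hlow x hx.1
      have h2 := hIbound c₀ v le_rfl hv
      linarith
    have hlogS : Tendsto (fun v => Real.log (S v)) atTop atBot :=
      Real.tendsto_log_nhdsGT_zero.comp
        (tendsto_nhdsWithin_of_tendsto_nhds_of_eventually_within _ hS0
          (Eventually.of_forall fun x => hS x))
    have htop' : Tendsto (fun v => 2 * L * (Real.log (S c₀) - Real.log (S v))) atTop atTop := by
      refine Tendsto.const_mul_atTop (by positivity) ?_
      have hneg : Tendsto (fun v => -Real.log (S v)) atTop atTop :=
        tendsto_neg_atBot_atTop.comp hlogS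
      refine (tendsto_atTop_add_const_left atTop (Real.log (S c₀)) hneg).congr fun v => ?_
      ring
    obtain ⟨v, hv1, hv2⟩ := ((htop'.eventually_gt_atTop (4 * g c₀)).and
      (eventually_ge_atTop c₀)).exists
    exact absurd (hbound v hv2) (not_le.mpr hv1)
  rw [hL0] at hgL
  -- final phase
  have hmain : ∀ ε : ℝ, 0 < ε → ε ≤ 1 / 4 →
      ∀ᶠ u in atTop, |g u / (∫ x in Set.Ioi u, h x) - 1 / 2| ≤ ε := by
    intro ε hε hε4
    obtain ⟨c, hc⟩ := eventually_atTop.mp (hev ε hε)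
    filter_upwards [eventually_ge_atTop (max c c₀)] with u hu
    have huc : c ≤ u := le_trans (le_max_left _ _) hu
    have huc₀ : c₀ ≤ u := le_trans (le_max_right _ _) hu
    have hIlim' := hIlim u huc₀
    have h1 : (1 / 2 - ε) * (∫ x in Set.Ioi u, h x) ≤ g u := by
      refine le_of_tendsto (hIlim'.const_mul (1 / 2 - ε)) ?_
      filter_upwards [eventually_ge_atTop u] with v hv
      have hA := (hfacts ε c hε hε4 hc u v huc hv).1
      have hgv := hgnn v
      linarith
    have h2 : g u ≤ (1 / 2 + ε) * (∫ x in Set.Ioi u, h x) := by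
      have hlim2 : Tendsto (fun v => g v + (1 / 2 + ε) * ∫ x in u..v, h x) atTop
          (𝓝 (0 + (1 / 2 + ε) * ∫ x in Set.Ioi u, h x)) :=
        hgL.add (hIlim'.const_mul _)
      rw [zero_add] at hlim2
      refine ge_of_tendsto hlim2 ?_
      filter_upwards [eventually_ge_atTop u] with v hv
      have hB := (hfacts ε c hε hε4 hc u v huc hv).2
      linarith
    have hgu : 0 < g u := by
      obtain ⟨hu0, hpu, -⟩ := hc₀ u huc₀
      have := hS u
      show (0:ℝ) < u ^ 2 * p u ^ 2 / S u
      positivity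
    have hIpos : 0 < ∫ x in Set.Ioi u, h x := by
      by_contra hI
      push_neg at hI
      nlinarith
    rw [abs_le]
    constructor
    · have := (le_div_iff₀ hIpos).mpr h1
      linarith
    · have := (div_le_iff₀ hIpos).mpr h2
      linarith
  rw [Metric.tendsto_atTop]
  intro ε hε
  have hε' : (0:ℝ) < min (ε / 2) (1 / 4) := by positivity
  obtain ⟨N, hN⟩ := eventually_atTop.mp (hmain _ hε' (min_le_right _ _))
  refine ⟨N, fun u hu => ?_⟩
  have hfin := hN u hu
  show dist (g u / ∫ x in Set.Ioi u, h x) (1 / 2) < ε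
  rw [Real.dist_eq]
  calc |g u / (∫ x in Set.Ioi u, h x) - 1 / 2| ≤ min (ε / 2) (1 / 4) := hfin
    _ ≤ ε / 2 := min_le_left _ _
    _ < ε := by linarith
end

section
/- Let F₀ be a continuously differentiable cdf with density p₀ = F₀′ and infinite right endpoint, let q and u₀ be real numbers with F₀(q) < 1 and q > 0, u₀ > 0, and let X* be a random variable with cdf F_q(x) = (F₀(x) − F₀(q))/(1 − F₀(q)) for x > q. Define Y* = ln(1 − F₀(u₀ X*/q)) − ln(1 − F₀(X*)). Then, provided the expectations and integrals involved are finite, E[Y*] = ln((1 − F₀(u₀))/(1 − F₀(q))) − (f(q) − 1), where f(q) = ∫_q^∞ (u₀/q) · ((1 − F₀(x))/(1 − F₀(q))) · p₀(u₀ x/q)/(1 − F₀(u₀ x/q)) dx. -/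
open MeasureTheory Filter Real
open scoped NNReal ENNReal

/-- The derivative of a monotone function is nonnegative. -/
lemma monotone_hasDerivAt_nonneg {f : ℝ → ℝ} {f' x : ℝ} (hm : Monotone f)
    (h : HasDerivAt f f' x) : 0 ≤ f' := by
  have h1 : Tendsto (slope f x) (nhdsWithin x (Set.Ioi x)) (nhds f') :=
    (hasDerivAt_iff_tendsto_slope.mp h).mono_left
      (nhdsWithin_mono x fun y hy => ne_of_gt hy)
  refine ge_of_tendsto h1 ?_
  filter_upwards [self_mem_nhdsWithin] with y hy
  rw [slope_def_field]
  exact div_nonneg (sub_nonneg.2 (hm (le_of_lt hy))) (sub_nonneg.2 (le_of_lt hy))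

/-- **Expectation of `Y* = ln(1 - F₀(u₀ X*/q)) - ln(1 - F₀(X*))` for the exceedance
distribution.** If `X*` has the exceedance cdf `F_q(x) = (F₀(x) - F₀(q))/(1 - F₀(q))` for
`x > q`, then `E[Y*] = ln((1 - F₀(u₀))/(1 - F₀(q))) - (f(q) - 1)`, where
`f(q) = ∫_q^∞ (u₀/q)·((1 - F₀(x))/(1 - F₀(q)))·p₀(u₀x/q)/(1 - F₀(u₀x/q)) dx`. -/
theorem exceedance_log_tail_ratio_expectation
    {Ω : Type*} [MeasurableSpace Ω] (P : Measure Ω) [IsProbabilityMeasure P]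
    (F₀ : ℝ → ℝ) (hcdf : IsCDF F₀) (hcont : ContDiff ℝ 1 F₀)
    (hend : ∀ x, 1 - F₀ x > 0)
    (q u₀ : ℝ) (hq : 0 < q) (hu₀ : 0 < u₀) (hFq : F₀ q < 1)
    (X : Ω → ℝ) (hXmeas : Measurable X)
    (hXgt : ∀ᵐ ω ∂P, q < X ω)
    (hXdist : ∀ x > q, P {ω | X ω ≤ x} = ENNReal.ofReal ((F₀ x - F₀ q) / (1 - F₀ q)))
    (hYint : Integrable
      (fun ω => Real.log (1 - F₀ (u₀ * X ω / q)) - Real.log (1 - F₀ (X ω))) P)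
    (hfint : IntegrableOn
      (fun x => u₀ / q * ((1 - F₀ x) / (1 - F₀ q)) *
        (deriv F₀ (u₀ * x / q) / (1 - F₀ (u₀ * x / q))))
      (Set.Ioi q)) :
    ∫ ω, (Real.log (1 - F₀ (u₀ * X ω / q)) - Real.log (1 - F₀ (X ω))) ∂P =
      Real.log ((1 - F₀ u₀) / (1 - F₀ q)) -
        ((∫ x in Set.Ioi q,
            u₀ / q * ((1 - F₀ x) / (1 - F₀ q)) *
              (deriv F₀ (u₀ * x / q) / (1 - F₀ (u₀ * x / q)))) - 1) := by
  obtain ⟨hmono, hbot, htop⟩ := hcdf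
  have hc : (0:ℝ) < 1 - F₀ q := hend q
  have hF0 : ∀ x, 0 ≤ F₀ x := by
    intro x
    refine le_of_tendsto hbot ?_
    filter_upwards [eventually_le_atBot x] with y hy using hmono hy
  have hdiff : Differentiable ℝ F₀ := hcont.differentiable one_ne_zero
  have hder : ∀ x, HasDerivAt F₀ (deriv F₀ x) x := fun x => (hdiff x).hasDerivAt
  have hpcont : Continuous (deriv F₀) := hcont.continuous_deriv le_rfl
  have hp0 : ∀ x, 0 ≤ deriv F₀ x := fun x => monotone_hasDerivAt_nonneg hmono (hder x)
  -- scaling map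
  have hsc : ∀ x : ℝ, HasDerivAt (fun y => u₀ * y / q) (u₀ / q) x := by
    intro x
    simpa using ((hasDerivAt_id x).const_mul u₀).div_const q
  have hscont : Continuous (fun x : ℝ => u₀ * x / q) :=
    (continuous_const.mul continuous_id).div_const q
  have hderc : ∀ x, HasDerivAt (fun y => F₀ (u₀ * y / q)) (deriv F₀ (u₀ * x / q) * (u₀ / q)) x :=
    fun x => (hder (u₀ * x / q)).comp x (hsc x)
  -- the function g
  set g : ℝ → ℝ := fun x => Real.log (1 - F₀ (u₀ * x / q)) - Real.log (1 - F₀ x) with hg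
  have haux : ∀ h : ℝ → ℝ, Continuous h → Continuous (fun x => Real.log (1 - F₀ (h x))) := by
    intro h hh
    rw [continuous_iff_continuousAt]
    intro x
    exact ContinuousAt.log ((continuous_const.sub (hcont.continuous.comp hh)).continuousAt)
      (ne_of_gt (hend _))
  have hgc : Continuous g := (haux _ hscont).sub (haux _ continuous_id)
  -- identification of the pushforward measure
  have hmap : P.map X = (volume.restrict (Set.Ioi q)).withDensity
      (fun x => ENNReal.ofReal (deriv F₀ x / (1 - F₀ q))) := by
    have hprob : IsProbabilityMeasure (P.map X) := Measure.isProbabilityMeasure_map hXmeas.aemeasurable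
    refine Measure.ext_of_Iic (P.map X) _ (fun a => ?_)
    rw [Measure.map_apply hXmeas measurableSet_Iic,
      withDensity_apply _ measurableSet_Iic, Measure.restrict_restrict measurableSet_Iic]
    rcases le_or_gt a q with hle | hlt
    · have h1 : P (X ⁻¹' Set.Iic a) = 0 := by
        refine measure_eq_zero_iff_ae_notMem.mpr ?_
        filter_upwards [hXgt] with ω hω
        simp only [Set.mem_preimage, Set.mem_Iic, not_le]
        linarith
      have h2 : Set.Iic a ∩ Set.Ioi q = ∅ := by
        ext x
        simp only [Set.mem_inter_iff, Set.mem_Iic, Set.mem_Ioi, Set.mem_empty_iff_false,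
          iff_false, not_and, not_lt]
        intro hx
        linarith
      rw [h1, h2]
      simp
    · have h2 : Set.Iic a ∩ Set.Ioi q = Set.Ioc q a := by
        rw [Set.inter_comm, Set.Ioi_inter_Iic]
      have hint : IntegrableOn (fun x => deriv F₀ x / (1 - F₀ q)) (Set.Ioc q a) :=
        (hpcont.div_const _).integrableOn_Ioc
      rw [h2, ← ofReal_integral_eq_lintegral_ofReal hint
        (ae_of_all _ fun x => div_nonneg (hp0 x) hc.le)]
      have hval : ∫ x in Set.Ioc q a, deriv F₀ x / (1 - F₀ q) = (F₀ a - F₀ q) / (1 - F₀ q) := by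
        rw [← intervalIntegral.integral_of_le hlt.le, intervalIntegral.integral_div,
          intervalIntegral.integral_eq_sub_of_hasDerivAt (fun x _ => hder x)
            (hpcont.intervalIntegrable _ _)]
      rw [hval]
      exact hXdist a hlt
  -- integrability of g against the density
  have hgmap : Integrable g (P.map X) := by
    rw [integrable_map_measure hgc.aestronglyMeasurable hXmeas.aemeasurable]
    exact hYint
  rw [hmap] at hgmap
  have hmeasd : Measurable (fun x => ENNReal.ofReal (deriv F₀ x / (1 - F₀ q))) :=
    (hpcont.div_const _).measurable.ennreal_ofReal
  have hgint' : IntegrableOn (fun x => g x * (deriv F₀ x / (1 - F₀ q))) (Set.Ioi q) := by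
    have := (integrable_withDensity_iff hmeasd
      (ae_of_all _ fun x => ENNReal.ofReal_lt_top)).mp hgmap
    refine this.congr (ae_of_all _ fun x => ?_)
    simp [ENNReal.toReal_ofReal (div_nonneg (hp0 x) hc.le)]
  -- expectation equals integral against density
  have hLHS : (∫ ω, (Real.log (1 - F₀ (u₀ * X ω / q)) - Real.log (1 - F₀ (X ω))) ∂P)
      = ∫ x in Set.Ioi q, g x * (deriv F₀ x / (1 - F₀ q)) := by
    have h1 : (∫ ω, (Real.log (1 - F₀ (u₀ * X ω / q)) - Real.log (1 - F₀ (X ω))) ∂P)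
        = ∫ y, g y ∂(P.map X) :=
      (integral_map hXmeas.aemeasurable hgc.aestronglyMeasurable).symm
    rw [h1, hmap]
    have h2 : (fun x => ENNReal.ofReal (deriv F₀ x / (1 - F₀ q)))
        = (fun x => ((Real.toNNReal (deriv F₀ x / (1 - F₀ q)) : ℝ≥0) : ℝ≥0∞)) := rfl
    rw [h2, integral_withDensity_eq_integral_smul
      ((hpcont.div_const _).measurable.real_toNNReal) g]
    refine setIntegral_congr_fun measurableSet_Ioi (fun x _ => ?_)
    rw [NNReal.smul_def, Real.coe_toNNReal _ (div_nonneg (hp0 x) hc.le), smul_eq_mul, mul_comm]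
  -- the B-part: antiderivative of log(1 - F₀ x) * deriv F₀ x / c
  set Φ : ℝ → ℝ := fun x => ((1 - F₀ x) - (1 - F₀ x) * Real.log (1 - F₀ x)) / (1 - F₀ q) with hΦ
  have hΦder : ∀ x, HasDerivAt Φ (Real.log (1 - F₀ x) * deriv F₀ x / (1 - F₀ q)) x := by
    intro x
    have hw : HasDerivAt (fun y => 1 - F₀ y) (-(deriv F₀ x)) x := (hder x).const_sub 1
    have hml : HasDerivAt (fun y => (1 - F₀ y) * Real.log (1 - F₀ y))
        ((Real.log (1 - F₀ x) + 1) * -(deriv F₀ x)) x :=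
      by have := (hasDerivAt_mul_log (ne_of_gt (hend x))).comp x hw; exact this
    have := (hw.sub hml).div_const (1 - F₀ q)
    refine this.congr_deriv ?_
    ring
  have hlog_nonpos : ∀ x, Real.log (1 - F₀ x) ≤ 0 := fun x =>
    Real.log_nonpos (by linarith [hend x]) (by linarith [hF0 x])
  have hbneg : ∀ x ∈ Set.Ioi q, Real.log (1 - F₀ x) * deriv F₀ x / (1 - F₀ q) ≤ 0 :=
    fun x _ => div_nonpos_of_nonpos_of_nonneg
      (mul_nonpos_of_nonpos_of_nonneg (hlog_nonpos x) (hp0 x)) hc.le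
  have hwtend : Tendsto (fun x => 1 - F₀ x) atTop (nhds 0) := by
    have : Tendsto (fun x => 1 - F₀ x) atTop (nhds (1 - 1)) := tendsto_const_nhds.sub htop
    simpa using this
  have hΦtend : Tendsto Φ atTop (nhds 0) := by
    have hml : Tendsto (fun x => (1 - F₀ x) * Real.log (1 - F₀ x)) atTop (nhds 0) := by
      have := (Real.continuous_mul_log.tendsto 0).comp hwtend
      simpa [Function.comp_def] using this
    have := (hwtend.sub hml).div_const (1 - F₀ q)
    simpa using this
  have hBint : IntegrableOn (fun x => Real.log (1 - F₀ x) * deriv F₀ x / (1 - F₀ q))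
      (Set.Ioi q) :=
    integrableOn_Ioi_deriv_of_nonpos' (fun x _ => hΦder x) hbneg hΦtend
  have hBval : ∫ x in Set.Ioi q, Real.log (1 - F₀ x) * deriv F₀ x / (1 - F₀ q)
      = Real.log (1 - F₀ q) - 1 := by
    rw [integral_Ioi_of_hasDerivAt_of_nonpos' (fun x _ => hΦder x) hbneg hΦtend]
    have hΦq : Φ q = 1 - Real.log (1 - F₀ q) := by
      rw [hΦ]
      field_simp
    rw [hΦq]
    ring
  -- the A-part
  have hAint : IntegrableOn (fun x => Real.log (1 - F₀ (u₀ * x / q)) * deriv F₀ x / (1 - F₀ q))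
      (Set.Ioi q) := by
    have := hgint'.add hBint
    refine this.congr (ae_of_all _ fun x => ?_)
    simp only [Pi.add_apply]
    ring
  -- derivative of Θ
  set Θ : ℝ → ℝ := fun x => (1 - F₀ x) * Real.log (1 - F₀ (u₀ * x / q)) / (1 - F₀ q) with hΘ
  have hlog2 : ∀ x, HasDerivAt (fun y => Real.log (1 - F₀ (u₀ * y / q)))
      (-(deriv F₀ (u₀ * x / q) * (u₀ / q)) / (1 - F₀ (u₀ * x / q))) x := by
    intro x
    exact ((hderc x).const_sub 1).log (ne_of_gt (hend _))
  have hΘder : ∀ x, HasDerivAt Θ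
      (-(Real.log (1 - F₀ (u₀ * x / q)) * deriv F₀ x / (1 - F₀ q))
        - u₀ / q * ((1 - F₀ x) / (1 - F₀ q)) *
            (deriv F₀ (u₀ * x / q) / (1 - F₀ (u₀ * x / q)))) x := by
    intro x
    have hw : HasDerivAt (fun y => 1 - F₀ y) (-(deriv F₀ x)) x := (hder x).const_sub 1
    have := (hw.mul (hlog2 x)).div_const (1 - F₀ q)
    refine this.congr_deriv ?_
    ring
  have hΘ'int : IntegrableOn (fun x =>
      (-(Real.log (1 - F₀ (u₀ * x / q)) * deriv F₀ x / (1 - F₀ q))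
        - u₀ / q * ((1 - F₀ x) / (1 - F₀ q)) *
            (deriv F₀ (u₀ * x / q) / (1 - F₀ (u₀ * x / q))))) (Set.Ioi q) :=
    hAint.neg.sub hfint
  -- Θ converges at infinity
  have hΘlim : Tendsto Θ atTop (nhds (Θ q + ∫ x in Set.Ioi q,
      (-(Real.log (1 - F₀ (u₀ * x / q)) * deriv F₀ x / (1 - F₀ q))
        - u₀ / q * ((1 - F₀ x) / (1 - F₀ q)) *
            (deriv F₀ (u₀ * x / q) / (1 - F₀ (u₀ * x / q)))))) := by
    have h1 := intervalIntegral_tendsto_integral_Ioi q hΘ'int tendsto_id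
    have h2 : ∀ᶠ b in atTop, Θ q + ∫ x in q..(id b),
        (-(Real.log (1 - F₀ (u₀ * x / q)) * deriv F₀ x / (1 - F₀ q))
          - u₀ / q * ((1 - F₀ x) / (1 - F₀ q)) *
              (deriv F₀ (u₀ * x / q) / (1 - F₀ (u₀ * x / q)))) = Θ b := by
      filter_upwards [eventually_ge_atTop q] with b hb
      simp only [id_eq]
      rw [intervalIntegral.integral_eq_sub_of_hasDerivAt (fun x _ => hΘder x)
        ((intervalIntegrable_iff_integrableOn_Ioc_of_le hb).mpr
          (hΘ'int.mono_set Set.Ioc_subset_Ioi_self))]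
      ring
    exact Tendsto.congr' h2 ((tendsto_const_nhds.add h1))
  set I : ℝ := ∫ x in Set.Ioi q,
      (-(Real.log (1 - F₀ (u₀ * x / q)) * deriv F₀ x / (1 - F₀ q))
        - u₀ / q * ((1 - F₀ x) / (1 - F₀ q)) *
            (deriv F₀ (u₀ * x / q) / (1 - F₀ (u₀ * x / q)))) with hI
  have hΘnonpos : ∀ x, Θ x ≤ 0 := fun x =>
    div_nonpos_of_nonpos_of_nonneg
      (mul_nonpos_of_nonneg_of_nonpos (hend x).le (hlog_nonpos (u₀ * x / q))) hc.le
  -- L := Θ q + I ≤ 0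
  have hL0 : Θ q + I ≤ 0 := le_of_tendsto hΘlim (Eventually.of_forall hΘnonpos)
  -- the function V = -log(1 - F₀(u₀ x / q))
  have hVder : ∀ x, HasDerivAt (fun y => -Real.log (1 - F₀ (u₀ * y / q)))
      (deriv F₀ (u₀ * x / q) * (u₀ / q) / (1 - F₀ (u₀ * x / q))) x := by
    intro x
    have := (hlog2 x).neg
    refine this.congr_deriv ?_
    ring
  have hVcont : Continuous (fun x => -Real.log (1 - F₀ (u₀ * x / q))) := (haux _ hscont).neg
  have hV'cont : Continuous
      (fun x => deriv F₀ (u₀ * x / q) * (u₀ / q) / (1 - F₀ (u₀ * x / q))) :=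
    ((hpcont.comp hscont).mul continuous_const).div
      (continuous_const.sub (hcont.continuous.comp hscont)) (fun x => (hend _).ne')
  have hV'0 : ∀ x, 0 ≤ deriv F₀ (u₀ * x / q) * (u₀ / q) / (1 - F₀ (u₀ * x / q)) := fun x =>
    div_nonneg (mul_nonneg (hp0 _) (div_nonneg hu₀.le hq.le)) (hend _).le
  have harg : Tendsto (fun x : ℝ => u₀ * x / q) atTop atTop :=
    (tendsto_id.const_mul_atTop hu₀).atTop_div_const hq
  have hVtop : Tendsto (fun x => -Real.log (1 - F₀ (u₀ * x / q))) atTop atTop := by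
    have hw2 : Tendsto (fun x => 1 - F₀ (u₀ * x / q)) atTop (nhdsWithin 0 (Set.Ioi 0)) := by
      refine tendsto_nhdsWithin_of_tendsto_nhds_of_eventually_within _ ?_
        (Eventually.of_forall fun x => hend _)
      have : Tendsto (fun x => 1 - F₀ (u₀ * x / q)) atTop (nhds (1 - 1)) :=
        tendsto_const_nhds.sub (htop.comp harg)
      simpa using this
    exact tendsto_neg_atBot_atTop.comp (Real.tendsto_log_nhdsGT_zero.comp hw2)
  have hgf0 : ∀ x, 0 ≤ u₀ / q * ((1 - F₀ x) / (1 - F₀ q)) *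
      (deriv F₀ (u₀ * x / q) / (1 - F₀ (u₀ * x / q))) := fun x =>
    mul_nonneg (mul_nonneg (div_nonneg hu₀.le hq.le) (div_nonneg (hend x).le hc.le))
      (div_nonneg (hp0 _) (hend _).le)
  -- L ≥ 0 by contradiction
  have hLge : 0 ≤ Θ q + I := by
    by_contra hneg
    push_neg at hneg
    have hδpos : 0 < -((Θ q + I) / 2) * (1 - F₀ q) := mul_pos (by linarith) hc
    set δ := -((Θ q + I) / 2) * (1 - F₀ q) with hδdef
    have hev1 : ∀ᶠ x in atTop, δ ≤ (1 - F₀ x) * -Real.log (1 - F₀ (u₀ * x / q)) := by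
      have hlt : ∀ᶠ x in atTop, Θ x < (Θ q + I) / 2 :=
        hΘlim.eventually_lt_const (by linarith)
      filter_upwards [hlt] with x hx
      simp only [hΘ] at hx
      have h1 : (1 - F₀ x) * Real.log (1 - F₀ (u₀ * x / q)) < (Θ q + I) / 2 * (1 - F₀ q) :=
        (div_lt_iff₀ hc).mp hx
      rw [hδdef]
      nlinarith
    clear hδdef
    clear_value δ
    have hev2 : ∀ᶠ x in atTop, (1:ℝ) ≤ -Real.log (1 - F₀ (u₀ * x / q)) :=
      hVtop.eventually_ge_atTop 1
    obtain ⟨M, hM⟩ := eventually_atTop.mp ((hev1.and hev2).and (eventually_gt_atTop q))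
    have hMq : q < M := (hM M le_rfl).2
    have hIfM : IntegrableOn (fun x => u₀ / q * ((1 - F₀ x) / (1 - F₀ q)) *
        (deriv F₀ (u₀ * x / q) / (1 - F₀ (u₀ * x / q)))) (Set.Ioi M) :=
      hfint.mono_set (Set.Ioi_subset_Ioi hMq.le)
    have hbound : ∀ b, M ≤ b →
        Real.log (-Real.log (1 - F₀ (u₀ * b / q)))
          - Real.log (-Real.log (1 - F₀ (u₀ * M / q)))
          ≤ (1 - F₀ q) / δ * ∫ x in Set.Ioi M, u₀ / q * ((1 - F₀ x) / (1 - F₀ q)) *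
              (deriv F₀ (u₀ * x / q) / (1 - F₀ (u₀ * x / q))) := by
      intro b hb
      have hVge : ∀ x ∈ Set.Icc M b, (1:ℝ) ≤ -Real.log (1 - F₀ (u₀ * x / q)) :=
        fun x hx => (hM x hx.1).1.2
      have hδle : ∀ x ∈ Set.Icc M b,
          δ ≤ (1 - F₀ x) * -Real.log (1 - F₀ (u₀ * x / q)) :=
        fun x hx => (hM x hx.1).1.1
      have hftc : ∫ x in M..b,
          (deriv F₀ (u₀ * x / q) * (u₀ / q) / (1 - F₀ (u₀ * x / q)))
            / (-Real.log (1 - F₀ (u₀ * x / q)))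
          = Real.log (-Real.log (1 - F₀ (u₀ * b / q)))
            - Real.log (-Real.log (1 - F₀ (u₀ * M / q))) := by
        refine intervalIntegral.integral_eq_sub_of_hasDerivAt
          (f := fun x => Real.log (-Real.log (1 - F₀ (u₀ * x / q)))) (fun x hx => ?_) ?_
        · have hx' : x ∈ Set.Icc M b := by rwa [Set.uIcc_of_le hb] at hx
          exact (hVder x).log (by have := hVge x hx'; positivity)
        · apply ContinuousOn.intervalIntegrable
          rw [Set.uIcc_of_le hb]
          exact hV'cont.continuousOn.div hVcont.continuousOn
            (fun x hx => by have := hVge x hx; positivity)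
      have hii1 : IntervalIntegrable
          (fun x => (deriv F₀ (u₀ * x / q) * (u₀ / q) / (1 - F₀ (u₀ * x / q)))
            / (-Real.log (1 - F₀ (u₀ * x / q)))) volume M b := by
        apply ContinuousOn.intervalIntegrable
        rw [Set.uIcc_of_le hb]
        exact hV'cont.continuousOn.div hVcont.continuousOn
          (fun x hx => by have := hVge x hx; positivity)
      have hii2 : IntervalIntegrable
          (fun x => (1 - F₀ q) / δ * (u₀ / q * ((1 - F₀ x) / (1 - F₀ q)) *
            (deriv F₀ (u₀ * x / q) / (1 - F₀ (u₀ * x / q))))) volume M b := by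
        refine ((intervalIntegrable_iff_integrableOn_Ioc_of_le hb).mpr ?_).const_mul _
        exact hfint.mono_set (Set.Ioc_subset_Ioi_self.trans (Set.Ioi_subset_Ioi hMq.le))
      have hptwise : ∀ x ∈ Set.Icc M b,
          (deriv F₀ (u₀ * x / q) * (u₀ / q) / (1 - F₀ (u₀ * x / q)))
            / (-Real.log (1 - F₀ (u₀ * x / q)))
          ≤ (1 - F₀ q) / δ * (u₀ / q * ((1 - F₀ x) / (1 - F₀ q)) *
            (deriv F₀ (u₀ * x / q) / (1 - F₀ (u₀ * x / q)))) := by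
        intro x hx
        have hV1 := hVge x hx
        have hδx := hδle x hx
        have hA0 := hV'0 x
        have hrw : u₀ / q * ((1 - F₀ x) / (1 - F₀ q)) *
            (deriv F₀ (u₀ * x / q) / (1 - F₀ (u₀ * x / q)))
            = ((1 - F₀ x) * (deriv F₀ (u₀ * x / q) * (u₀ / q) / (1 - F₀ (u₀ * x / q))))
              / (1 - F₀ q) := by ring
        rw [hrw, div_mul_div_comm, mul_comm (1 - F₀ q), mul_div_mul_right _ _ hc.ne',
          div_le_div_iff₀ (by linarith) hδpos]
        nlinarith [mul_le_mul_of_nonneg_left hδx hA0]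
      have h1 := intervalIntegral.integral_mono_on hb hii1 hii2 hptwise
      rw [hftc] at h1
      rw [intervalIntegral.integral_const_mul] at h1
      refine h1.trans (mul_le_mul_of_nonneg_left ?_ (by positivity))
      rw [intervalIntegral.integral_of_le hb]
      exact setIntegral_mono_set hIfM (ae_of_all _ hgf0)
        (HasSubset.Subset.eventuallyLE Set.Ioc_subset_Ioi_self)
    have htend2 : Tendsto (fun b => Real.log (-Real.log (1 - F₀ (u₀ * b / q)))) atTop atTop :=
      Real.tendsto_log_atTop.comp hVtop
    obtain ⟨b, hb1, hb2⟩ := ((htend2.eventually_gt_atTop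
      (Real.log (-Real.log (1 - F₀ (u₀ * M / q)))
        + (1 - F₀ q) / δ * ∫ x in Set.Ioi M, u₀ / q * ((1 - F₀ x) / (1 - F₀ q)) *
            (deriv F₀ (u₀ * x / q) / (1 - F₀ (u₀ * x / q))))).and
      (eventually_ge_atTop M)).exists
    linarith [hbound b hb2]
  -- conclude L = 0 and finish
  have hLzero : Θ q + I = 0 := le_antisymm hL0 hLge
  have hΘq : Θ q = Real.log (1 - F₀ u₀) := by
    have h1 : u₀ * q / q = u₀ := by field_simp
    simp only [hΘ, h1]
    rw [mul_comm, mul_div_assoc, div_self hc.ne', mul_one]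
  have hIval : I = -Real.log (1 - F₀ u₀) := by linarith
  have hAval : ∫ x in Set.Ioi q, Real.log (1 - F₀ (u₀ * x / q)) * deriv F₀ x / (1 - F₀ q)
      = Real.log (1 - F₀ u₀) - ∫ x in Set.Ioi q, u₀ / q * ((1 - F₀ x) / (1 - F₀ q)) *
          (deriv F₀ (u₀ * x / q) / (1 - F₀ (u₀ * x / q))) := by
    have h2 : I = -(∫ x in Set.Ioi q,
        Real.log (1 - F₀ (u₀ * x / q)) * deriv F₀ x / (1 - F₀ q))
        - ∫ x in Set.Ioi q, u₀ / q * ((1 - F₀ x) / (1 - F₀ q)) *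
            (deriv F₀ (u₀ * x / q) / (1 - F₀ (u₀ * x / q))) := by
      have hAint' : IntegrableOn
          (fun x => -(Real.log (1 - F₀ (u₀ * x / q)) * deriv F₀ x / (1 - F₀ q)))
          (Set.Ioi q) := hAint.neg
      rw [hI, integral_sub hAint' hfint, integral_neg]
    rw [hIval] at h2
    linarith
  rw [hLHS]
  have hsplit : ∫ x in Set.Ioi q, g x * (deriv F₀ x / (1 - F₀ q))
      = (∫ x in Set.Ioi q, Real.log (1 - F₀ (u₀ * x / q)) * deriv F₀ x / (1 - F₀ q))
        - ∫ x in Set.Ioi q, Real.log (1 - F₀ x) * deriv F₀ x / (1 - F₀ q) := by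
    rw [← integral_sub hAint hBint]
    refine setIntegral_congr_fun measurableSet_Ioi fun x _ => ?_
    simp only [hg]
    ring
  rw [hsplit, hAval, hBval, Real.log_div (hend u₀).ne' hc.ne']
  ring
end
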